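/- arXiv:2412.11269 — 5 statements merged into one kernel-verified Lean document; each statement's English description precedes it below -/
import Mathlib

section
/- For all nonnegative integers p and k, the sum over all (k+1)-tuples (p₀,…,p_k) of nonnegative integers with p₀+⋯+p_k = p of the product C_{p₀}·C_{p₁}·⋯·C_{p_k} equals ((k+1)/(2p+k+1))·binom(2p+k+1, p), where Cₙ is the n-th Catalan number. -/
open Finset PowerSeries

noncomputable def catC : PowerSeries ℚ := PowerSeries.mk fun n => (catalan n : ℚ)

lemma catC_eq : catC = 1 + PowerSeries.X * catC ^ 2 := by
  ext n
  cases n with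
  | zero => simp [catC, PowerSeries.coeff_zero_eq_constantCoeff]
  | succ n =>
    rw [map_add, PowerSeries.coeff_succ_X_mul, sq, PowerSeries.coeff_mul]
    simp [catC, PowerSeries.coeff_mk, PowerSeries.coeff_one, catalan_succ' n,
      Nat.cast_sum]

lemma conv_tuple (F : ℕ → ℕ) (m p : ℕ) :
    ∑ f ∈ Finset.Nat.antidiagonalTuple (m + 1) p, ∏ i, F (f i)
      = ∑ ij ∈ Finset.HasAntidiagonal.antidiagonal p,
          F ij.1 * ∑ g ∈ Finset.Nat.antidiagonalTuple m ij.2, ∏ i, F (g i) := by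
  simp_rw [Finset.mul_sum]
  rw [Finset.sum_sigma']
  refine Finset.sum_nbij'
    (i := fun (f : Fin (m+1) → ℕ) =>
      (⟨(f 0, ∑ i : Fin m, f i.succ), Fin.tail f⟩ : Σ ij : ℕ × ℕ, Fin m → ℕ))
    (j := fun x => Fin.cons x.1.1 x.2) ?_ ?_ ?_ ?_ ?_
  · intro f hf
    rw [Finset.Nat.mem_antidiagonalTuple] at hf
    rw [Fin.sum_univ_succ] at hf
    simp only [Finset.mem_sigma, Finset.HasAntidiagonal.mem_antidiagonal, Finset.Nat.mem_antidiagonalTuple]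
    exact ⟨hf, by simp [Fin.tail]⟩
  · intro x hx
    rw [Finset.mem_sigma, Finset.HasAntidiagonal.mem_antidiagonal, Finset.Nat.mem_antidiagonalTuple] at hx
    rw [Finset.Nat.mem_antidiagonalTuple, Fin.sum_cons, hx.2, hx.1]
  · intro f hf
    exact Fin.cons_self_tail f
  · intro x hx
    rw [Finset.mem_sigma, Finset.HasAntidiagonal.mem_antidiagonal, Finset.Nat.mem_antidiagonalTuple] at hx
    refine Sigma.ext ?_ ?_
    · simp only [Fin.cons_zero, Fin.cons_succ]
      have : ∑ i : Fin m, x.2 i = x.1.2 := hx.2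
      ext
      · rfl
      · simpa using this
    · simp [Fin.tail_cons]
  · intro f hf
    rw [Fin.prod_univ_succ]
    simp [Fin.tail]

lemma coeff_catC_pow (m p : ℕ) :
    (PowerSeries.coeff p) (catC ^ m)
      = ((∑ f ∈ Finset.Nat.antidiagonalTuple m p, ∏ i, catalan (f i) : ℕ) : ℚ) := by
  induction m generalizing p with
  | zero =>
    cases p with
    | zero => simp [Finset.Nat.antidiagonalTuple_zero_zero]
    | succ p => simp [Finset.Nat.antidiagonalTuple_zero_succ]
  | succ m ih =>
    rw [pow_succ, mul_comm, PowerSeries.coeff_mul, conv_tuple]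
    push_cast
    refine Finset.sum_congr rfl fun ij _ => ?_
    rw [ih ij.2]
    simp [catC, PowerSeries.coeff_mk]

lemma choose_ratio (n q : ℕ) (h : q + 1 ≤ n) :
    ((n.choose (q + 1) : ℚ)) * (q + 1) = n.choose q * ((n : ℚ) - q) := by
  have h1 := Nat.choose_succ_right_eq n q
  have h2 : (((n - q : ℕ) : ℚ)) = (n : ℚ) - q := by
    push_cast [Nat.cast_sub (by omega : q ≤ n)]; ring
  calc ((n.choose (q + 1) : ℚ)) * (q + 1) = ((n.choose (q + 1) * (q + 1) : ℕ) : ℚ) := by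
        push_cast; ring
    _ = ((n.choose q * (n - q) : ℕ) : ℚ) := by rw [h1]
    _ = n.choose q * ((n : ℚ) - q) := by rw [Nat.cast_mul, h2]

lemma alg0 (p : ℕ) :
    (2:ℚ)/(2*(p:ℚ)+2) * ((2*p+2).choose p)
      = 1/(2*(p:ℚ)+3)*(((2*p+3).choose (p+1) : ℕ)) := by
  have hr := choose_ratio (2*p+2) p (by omega)
  have hsub : ((2*p+2 : ℕ):ℚ) - p = p + 2 := by push_cast; ring
  rw [hsub] at hr
  have hpas : (2*p+3).choose (p+1) = (2*p+2).choose p + (2*p+2).choose (p+1) :=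
    Nat.choose_succ_succ (2*p+2) p
  rw [hpas]
  have h1 : (2*(p:ℚ)+2) ≠ 0 := by positivity
  have h2 : (2*(p:ℚ)+3) ≠ 0 := by positivity
  push_cast
  field_simp
  linear_combination (-1 : ℚ) * hr

lemma alg1 (p k : ℕ) :
    ((k:ℚ)+2)/(2*(p:ℚ)+k+4) * (((2*p+k+4).choose (p+1) : ℕ))
      = ((k:ℚ)+1)/(2*(p:ℚ)+k+3) * (((2*p+k+3).choose (p+1) : ℕ))
        + ((k:ℚ)+3)/(2*(p:ℚ)+k+3) * (((2*p+k+3).choose p : ℕ)) := by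
  have hr := choose_ratio (2*p+k+3) p (by omega)
  have hsub : ((2*p+k+3 : ℕ):ℚ) - p = (p:ℚ) + k + 3 := by push_cast; ring
  rw [hsub] at hr
  have hpas : (2*p+k+4).choose (p+1) = (2*p+k+3).choose p + (2*p+k+3).choose (p+1) :=
    Nat.choose_succ_succ (2*p+k+3) p
  rw [hpas]
  have h1 : (2*(p:ℚ)+k+3) ≠ 0 := by positivity
  have h2 : (2*(p:ℚ)+k+4) ≠ 0 := by positivity
  push_cast
  field_simp
  linear_combination (2 : ℚ) * hr

lemma key (p : ℕ) : ∀ k : ℕ, (PowerSeries.coeff p) (catC ^ (k + 1))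
    = (k + 1) / (2 * p + k + 1) * Nat.choose (2 * p + k + 1) p := by
  induction p using Nat.strong_induction_on with
  | _ p IH =>
    cases p with
    | zero =>
      intro k
      have h1 : (PowerSeries.constantCoeff) catC = 1 := by simp [catC]
      have h2 : (PowerSeries.coeff 0) (catC ^ (k + 1)) = 1 := by
        rw [PowerSeries.coeff_zero_eq_constantCoeff, map_pow, h1, one_pow]
      rw [h2]
      have hk : ((k : ℚ) + 1) ≠ 0 := by positivity
      simp [hk]
    | succ p =>
      have hstep : ∀ j : ℕ, (PowerSeries.coeff (p + 1)) (catC ^ (j + 1))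
          = (PowerSeries.coeff (p + 1)) (catC ^ j)
            + (PowerSeries.coeff p) (catC ^ (j + 2)) := by
        intro j
        have h : catC ^ (j + 1) = catC ^ j + PowerSeries.X * catC ^ (j + 2) := by
          calc catC ^ (j+1) = catC ^ j * catC := by ring
            _ = catC ^ j * (1 + PowerSeries.X * catC ^ 2) := by rw [← catC_eq]
            _ = catC ^ j + PowerSeries.X * catC ^ (j + 2) := by ring
        rw [h, map_add, PowerSeries.coeff_succ_X_mul]
      intro k
      induction k with
      | zero =>
        rw [hstep 0, pow_zero, IH p (by omega) 1]
        have h0 : (PowerSeries.coeff (p + 1)) (1 : PowerSeries ℚ) = 0 := by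
          simp [PowerSeries.coeff_one]
        rw [h0, zero_add]
        rw [show 2*p+1+1 = 2*p+2 from by ring, show 2*(p+1)+0+1 = 2*p+3 from by ring]
        have := alg0 p
        push_cast at this ⊢
        linear_combination this
      | succ k ihk =>
        rw [hstep (k + 1), ihk, IH p (by omega) (k + 2)]
        rw [show 2*(p+1)+(k+1)+1 = 2*p+k+4 from by ring,
            show 2*(p+1)+k+1 = 2*p+k+3 from by ring,
            show 2*p+(k+2)+1 = 2*p+k+3 from by ring]
        have := alg1 p k
        push_cast at this ⊢
        linear_combination (-1 : ℚ) * this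

theorem stmt_9 (p k : ℕ) :
    ((∑ f ∈ Finset.Nat.antidiagonalTuple (k + 1) p, ∏ i, catalan (f i) : ℕ) : ℚ)
      = (k + 1) / (2 * p + k + 1) * Nat.choose (2 * p + k + 1) p := by
  rw [← coeff_catC_pow, key p k]
end

section
/- For all nonnegative integers p, k and any fixed index i with 0 ≤ i ≤ k, the sum over all (k+1)-tuples (p₀,…,p_k) of nonnegative integers with p₀+⋯+p_k = p of (p_i + 1)·C_{p₀}·C_{p₁}·⋯·C_{p_k} equals binom(2p+k, p). -/
open Finset PowerSeries

noncomputable def Cser : PowerSeries ℕ := PowerSeries.mk catalan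

noncomputable def Bser (k : ℕ) : PowerSeries ℕ := PowerSeries.mk fun b => (2 * b + k).choose b

lemma hC : Cser = 1 + PowerSeries.X * (Cser * Cser) := by
  ext n
  cases n with
  | zero => simp [Cser]
  | succ q =>
    rw [map_add, coeff_succ_X_mul, coeff_mul]
    simp [Cser, catalan_succ' q]

lemma keyCoeff : ∀ p : ℕ, ∀ k : ℕ,
    PowerSeries.coeff p (Cser * Bser k) = (2 * p + (k + 1)).choose p := by
  intro p
  induction p using Nat.strong_induction_on with
  | _ p ih =>
    intro k
    match p with
    | 0 => simp [coeff_mul, Cser, Bser]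
    | q + 1 =>
      have expand : Cser * Bser k = Bser k + PowerSeries.X * (Cser * (Cser * Bser k)) := by
        conv_lhs => rw [hC]
        ring
      rw [expand, map_add, coeff_succ_X_mul]
      have h1 : PowerSeries.coeff q (Cser * (Cser * Bser k))
          = PowerSeries.coeff q (Cser * Bser (k + 1)) := by
        rw [coeff_mul, coeff_mul]
        refine Finset.sum_congr rfl fun x hx => ?_
        rw [Finset.HasAntidiagonal.mem_antidiagonal] at hx
        rw [ih x.2 (by omega) k]
        simp [Bser]
      rw [h1, ih q (by omega) (k + 1)]
      simp only [Bser, coeff_mk]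
      have e1 : 2 * (q + 1) + (k + 1) = (2 * q + k + 2) + 1 := by ring
      have e2 : 2 * (q + 1) + k = 2 * q + k + 2 := by ring
      have e3 : 2 * q + (k + 1 + 1) = 2 * q + k + 2 := by ring
      rw [e1, e2, e3, Nat.choose_succ_succ (2 * q + k + 2) q]
      simp only [Nat.succ_eq_add_one]
      omega

lemma Bser_eq (k : ℕ) : Bser k = PowerSeries.mk Nat.centralBinom * Cser ^ k := by
  induction k with
  | zero =>
    ext b; simp [Bser, Nat.centralBinom]
  | succ k ih =>
    ext p
    rw [show PowerSeries.mk Nat.centralBinom * Cser ^ (k + 1)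
        = Cser * (PowerSeries.mk Nat.centralBinom * Cser ^ k) by ring, ← ih]
    rw [keyCoeff p k]
    simp [Bser]

lemma sum_antidiagonalTuple_succ {M : Type*} [AddCommMonoid M] (k n : ℕ)
    (f : (Fin (k + 1) → ℕ) → M) :
    ∑ x ∈ Finset.Nat.antidiagonalTuple (k + 1) n, f x
      = ∑ ab ∈ Finset.HasAntidiagonal.antidiagonal n,
          ∑ x ∈ Finset.Nat.antidiagonalTuple k ab.2, f (Fin.cons ab.1 x) := by
  rw [Finset.sum_sigma']
  refine Finset.sum_nbij' (fun y => (⟨(y 0, ∑ j : Fin k, y j.succ), Fin.tail y⟩ :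
      (_ : ℕ × ℕ) × (Fin k → ℕ)))
    (fun x => Fin.cons x.1.1 x.2) ?_ ?_ ?_ ?_ ?_
  · intro y hy
    rw [Finset.Nat.mem_antidiagonalTuple] at hy
    simp only [Finset.mem_sigma, Finset.HasAntidiagonal.mem_antidiagonal, Finset.Nat.mem_antidiagonalTuple]
    exact ⟨by rw [← hy, Fin.sum_univ_succ], rfl⟩
  · rintro ⟨⟨a, b⟩, x⟩ hx
    simp only [Finset.mem_sigma, Finset.HasAntidiagonal.mem_antidiagonal,
      Finset.Nat.mem_antidiagonalTuple] at hx ⊢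
    rw [Fin.sum_univ_succ]
    simp only [Fin.cons_zero, Fin.cons_succ]
    rw [hx.2]
    exact hx.1
  · intro y hy
    simp [Fin.cons_self_tail]
  · rintro ⟨⟨a, b⟩, x⟩ hx
    simp only [Finset.mem_sigma, Finset.HasAntidiagonal.mem_antidiagonal,
      Finset.Nat.mem_antidiagonalTuple] at hx
    simp only [Fin.cons_zero, Fin.tail_cons, Fin.cons_succ]
    congr 1
    rw [hx.2]
  · intro y hy
    rw [Fin.cons_self_tail]

lemma coeff_prod_tuple : ∀ (k p : ℕ) (g : Fin k → ℕ → ℕ),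
    ∑ f ∈ Finset.Nat.antidiagonalTuple k p, ∏ j, g j (f j)
      = PowerSeries.coeff p (∏ j, PowerSeries.mk (g j)) := by
  intro k
  induction k with
  | zero =>
    intro p g
    cases p with
    | zero => simp
    | succ q => simp [Finset.Nat.antidiagonalTuple_zero_succ]
  | succ k ih =>
    intro p g
    rw [sum_antidiagonalTuple_succ]
    rw [Fin.prod_univ_succ (f := fun j => PowerSeries.mk (g j)), coeff_mul]
    refine Finset.sum_congr rfl fun ab hab => ?_
    have : ∀ x ∈ Finset.Nat.antidiagonalTuple k ab.2,
        (∏ j, g j ((Fin.cons ab.1 x : Fin (k+1) → ℕ) j)) = g 0 ab.1 * ∏ j : Fin k, g j.succ (x j) := by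
      intro x hx
      rw [Fin.prod_univ_succ]
      simp
    rw [Finset.sum_congr rfl this, ← Finset.mul_sum, ih ab.2 (fun j => g j.succ)]
    simp

theorem stmt_10 (p k : ℕ) (i : Fin (k + 1)) :
    (∑ f ∈ Finset.Nat.antidiagonalTuple (k + 1) p, (f i + 1) * ∏ j, catalan (f j))
      = Nat.choose (2 * p + k) p := by
  classical
  set g : Fin (k + 1) → ℕ → ℕ := fun j n => if j = i then Nat.centralBinom n else catalan n with hg
  have step1 : ∀ f : Fin (k + 1) → ℕ,
      (f i + 1) * ∏ j, catalan (f j) = ∏ j, g j (f j) := by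
    intro f
    rw [← Finset.mul_prod_erase Finset.univ (fun j => g j (f j)) (Finset.mem_univ i),
      ← Finset.mul_prod_erase Finset.univ (fun j => catalan (f j)) (Finset.mem_univ i),
      ← mul_assoc, succ_mul_catalan_eq_centralBinom]
    simp only [hg, if_pos rfl]
    congr 1
    refine Finset.prod_congr rfl fun j hj => ?_
    rw [if_neg (Finset.ne_of_mem_erase hj)]
  calc ∑ f ∈ Finset.Nat.antidiagonalTuple (k + 1) p, (f i + 1) * ∏ j, catalan (f j)
      = ∑ f ∈ Finset.Nat.antidiagonalTuple (k + 1) p, ∏ j, g j (f j) :=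
        Finset.sum_congr rfl fun f _ => step1 f
    _ = PowerSeries.coeff p (∏ j, PowerSeries.mk (g j)) := coeff_prod_tuple _ _ _
    _ = Nat.choose (2 * p + k) p := by
        have hprod : (∏ j, PowerSeries.mk (g j)) = Bser k := by
          rw [← Finset.mul_prod_erase Finset.univ (fun j => PowerSeries.mk (g j))
            (Finset.mem_univ i)]
          have h1 : PowerSeries.mk (g i) = PowerSeries.mk Nat.centralBinom := by
            simp [hg]
          have h2 : ∏ j ∈ Finset.univ.erase i, PowerSeries.mk (g j) = Cser ^ k := by
            rw [Finset.prod_congr rfl (fun j hj => by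
              rw [show PowerSeries.mk (g j) = Cser by
                simp [hg, Cser, if_neg (Finset.ne_of_mem_erase hj)]]),
              Finset.prod_const, Finset.card_erase_of_mem (Finset.mem_univ i)]
            simp
          rw [h1, h2, Bser_eq]
        rw [hprod]
        simp [Bser]
end

section
/- For every n ≥ 1, Σ_{m=1}^{n} (m·2^m/(2n-m))·binom(2n-m, n-m) = binom(2n, n). -/
theorem stmt_12 (n : ℕ) (hn : 1 ≤ n) :
    (∑ m ∈ Finset.Icc 1 n,
        (m : ℚ) * 2 ^ m / (2 * n - m) * Nat.choose (2 * n - m) (n - m))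
      = Nat.choose (2 * n) n := by
  set g : ℕ → ℚ := fun k =>
    if k ≤ n then (2 : ℚ) ^ k * Nat.choose (2 * n - k) (n - k) else 0 with hg
  have key : ∀ m ∈ Finset.Icc 1 n,
      (m : ℚ) * 2 ^ m / (2 * n - m) * Nat.choose (2 * n - m) (n - m)
        = g m - g (m + 1) := by
    intro m hm
    simp only [Finset.mem_Icc] at hm
    obtain ⟨hm1, hmn⟩ := hm
    rcases eq_or_lt_of_le hmn with h | h
    · subst h
      simp only [hg, le_refl, if_pos, Nat.lt_irrefl, if_neg (by omega : ¬ m + 1 ≤ m)]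
      have h1 : 2 * m - m = m := by omega
      have h2 : m - m = 0 := by omega
      rw [h1, h2]
      have hm0 : (m : ℚ) ≠ 0 := Nat.cast_ne_zero.mpr (by omega)

      field_simp
      ring
    · -- m < n
      have hle : m + 1 ≤ n := h
      simp only [hg, if_pos hmn, if_pos hle]
      -- nat identity
      have hnat : (2 * n - m) * Nat.choose (2 * n - m - 1) (n - m - 1)
          = Nat.choose (2 * n - m) (n - m) * (n - m) := by
        have := Nat.add_one_mul_choose_eq (2 * n - m - 1) (n - m - 1)
        have e1 : 2 * n - m - 1 + 1 = 2 * n - m := by omega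
        have e2 : n - m - 1 + 1 = n - m := by omega
        rwa [e1, e2] at this
      have e3 : 2 * n - (m + 1) = 2 * n - m - 1 := by omega
      have e4 : n - (m + 1) = n - m - 1 := by omega
      rw [e3, e4]
      have hden : (2 * (n : ℚ) - m) ≠ 0 := by
        have : (m : ℚ) < 2 * n := by exact_mod_cast (by omega : m < 2 * n)
        linarith
      have hcast : ((2 * n - m : ℕ) : ℚ) = 2 * (n : ℚ) - m := by
        push_cast [Nat.cast_sub (by omega : m ≤ 2 * n)]; ring
      have hq : (2 * (n : ℚ) - m) * Nat.choose (2 * n - m - 1) (n - m - 1)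
          = Nat.choose (2 * n - m) (n - m) * ((n : ℚ) - m) := by
        have := congrArg (Nat.cast : ℕ → ℚ) hnat
        push_cast [Nat.cast_sub (by omega : m ≤ 2 * n), Nat.cast_sub hmn] at this
        linarith [this]
      rw [div_mul_eq_mul_div, div_eq_iff hden]
      linear_combination (2:ℚ)^(m+1) * hq
  rw [Finset.sum_congr rfl key]
  have tele : ∑ m ∈ Finset.Icc 1 n, (g m - g (m + 1)) = g 1 - g (n + 1) := by
    rw [← Finset.Ico_add_one_right_eq_Icc, Finset.sum_Ico_eq_sum_range]
    have : n + 1 - 1 = n := by omega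
    rw [this]
    have := Finset.sum_range_sub' (fun i => g (1 + i)) n
    simpa [add_assoc, add_comm, add_left_comm] using this
  rw [tele]
  have hg1 : g 1 = 2 * Nat.choose (2 * n - 1) (n - 1) := by
    simp only [hg, if_pos hn]; ring
  have hgn1 : g (n + 1) = 0 := by
    simp only [hg, if_neg (by omega : ¬ n + 1 ≤ n)]
  rw [hg1, hgn1]
  -- 2 * C(2n-1, n-1) = C(2n, n)
  have hnat2 : 2 * n * Nat.choose (2 * n - 1) (n - 1) = Nat.choose (2 * n) n * n := by
    have := Nat.add_one_mul_choose_eq (2 * n - 1) (n - 1)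
    have e1 : 2 * n - 1 + 1 = 2 * n := by omega
    have e2 : n - 1 + 1 = n := by omega
    rwa [e1, e2] at this
  have hn0 : (n : ℚ) ≠ 0 := Nat.cast_ne_zero.mpr (by omega)
  have hq2 : 2 * (n : ℚ) * Nat.choose (2 * n - 1) (n - 1) = Nat.choose (2 * n) n * n := by
    exact_mod_cast congrArg (Nat.cast : ℕ → ℚ) hnat2
  rw [sub_zero]
  have h5 : (2 : ℚ) * Nat.choose (2 * n - 1) (n - 1) * n = Nat.choose (2 * n) n * n := by
    linarith [hq2]
  exact mul_right_cancel₀ hn0 h5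
end

section
/- For every n ≥ 1, Σ_{m=1}^{n} (m/(2n-m))·binom(2n-m, n-m) = Cₙ, the n-th Catalan number. -/
lemma key_nat (c b : ℕ) : (c + 1) * Nat.choose c b = (c + 1 - b) * Nat.choose (c + 1) b := by
  rw [Nat.add_one_mul_choose_eq, Nat.choose_succ_right_eq, Nat.mul_comm]

theorem stmt_13 (n : ℕ) (hn : 1 ≤ n) :
    (∑ m ∈ Finset.Icc 1 n, (m : ℚ) / (2 * n - m) * Nat.choose (2 * n - m) (n - m))
      = catalan n := by
  obtain ⟨k, rfl⟩ : ∃ k, n = k + 1 := ⟨n - 1, by omega⟩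
  -- Reindex the sum over Icc 1 (k+1) to a sum over range (k+1) via j = n - m
  have hre : (∑ m ∈ Finset.Icc 1 (k+1),
        (m : ℚ) / (2 * (k+1) - m) * Nat.choose (2 * (k+1) - m) ((k+1) - m))
      = ∑ j ∈ Finset.range (k+1),
        (((k+1) : ℚ) - j) / ((k+1) + j) * Nat.choose ((k+1) + j) j := by
    refine Finset.sum_nbij' (fun m => (k+1) - m) (fun j => (k+1) - j) ?_ ?_ ?_ ?_ ?_
    · intro a ha
      simp only [Finset.mem_Icc] at ha
      simp only [Finset.mem_range]
      omega
    · intro a ha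
      simp only [Finset.mem_range] at ha
      simp only [Finset.mem_Icc]
      omega
    · intro a ha
      simp only [Finset.mem_Icc] at ha
      show (k+1) - ((k+1) - a) = a
      omega
    · intro a ha
      simp only [Finset.mem_range] at ha
      show (k+1) - ((k+1) - a) = a
      omega
    · intro m hm
      simp only [Finset.mem_Icc] at hm
      have h1 : (k+1) + ((k+1) - m) = 2 * (k+1) - m := by omega
      have h2 : (((k+1) : ℚ) - ((k+1) - m : ℕ)) = m := by
        have : ((k+1) - m : ℕ) = (k+1) - m := rfl
        rw [Nat.cast_sub (by omega : m ≤ k + 1)]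
        push_cast
        ring
      have h3 : ((((k+1) + ((k+1) - m) : ℕ)) : ℚ) = 2 * ((k:ℚ)+1) - m := by
        rw [h1, Nat.cast_sub (by omega : m ≤ 2 * (k+1))]
        push_cast
        ring
      have hden : ((k:ℚ)+1) + (((k+1) - m : ℕ):ℚ) = 2 * ((k:ℚ)+1) - m := by
        rw [Nat.cast_sub (by omega : m ≤ k + 1)]
        push_cast
        ring
      rw [h2, hden, h1]
  push_cast
  rw [hre]
  -- Per-term identity
  have hterm : ∀ j ∈ Finset.range (k+1),
      (((k+1) : ℚ) - j) / ((k+1) + j) * Nat.choose ((k+1) + j) j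
      = 2 * (Nat.choose (k + j) j : ℚ) - Nat.choose ((k+1) + j) j := by
    intro j hj
    have hj' : j ≤ k := Nat.lt_succ_iff.mp (Finset.mem_range.mp hj)
    have hpos : ((k:ℚ) + 1 + j) ≠ 0 := by positivity
    have hk := key_nat (k + j) j
    have hk' : ((k:ℚ) + 1 + j) * Nat.choose (k + j) j
        = ((k:ℚ) + 1) * Nat.choose ((k+1) + j) j := by
      have h4 : k + j + 1 - j = k + 1 := by omega
      have h5 : k + j + 1 = (k + 1) + j := by omega
      rw [h4, h5] at hk
      exact_mod_cast congrArg (Nat.cast : ℕ → ℚ) hk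
    have hcast : (((k+1) : ℕ) : ℚ) + j = (k:ℚ) + 1 + j := by push_cast; ring
    rw [div_mul_eq_mul_div, div_eq_iff (by push_cast; positivity)]
    push_cast
    linear_combination (-2 : ℚ) * hk'
  rw [Finset.sum_congr rfl hterm, Finset.sum_sub_distrib, ← Finset.mul_sum]
  -- Evaluate the two sums using hockey stick
  have hs1 : (∑ j ∈ Finset.range (k+1), (Nat.choose (k + j) j : ℚ))
      = (Nat.choose (2*k + 1) (k+1) : ℚ) := by
    have : (∑ j ∈ Finset.range (k+1), Nat.choose (k + j) j)
        = Nat.choose (2*k + 1) (k+1) := by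
      have h1 : ∀ j, Nat.choose (k + j) j = Nat.choose (k + j) k := by
        intro j
        rw [← Nat.choose_symm (Nat.le_add_right k j)]
        congr 1
        omega
      simp_rw [h1]
      have h2 : (∑ j ∈ Finset.range (k+1), Nat.choose (k + j) k)
          = ∑ i ∈ Finset.Icc k (2*k), Nat.choose i k := by
        rw [Finset.range_eq_Ico]
        refine Finset.sum_nbij' (fun j => k + j) (fun i => i - k) ?_ ?_ ?_ ?_ ?_ <;>
          (intro a ha; simp only [Finset.mem_Ico, Finset.mem_Icc] at *) <;> first | omega | (congr 1 <;> omega)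
      rw [h2, Nat.sum_Icc_choose]
    exact_mod_cast congrArg (Nat.cast : ℕ → ℚ) this
  have hs2 : (∑ j ∈ Finset.range (k+1), (Nat.choose ((k+1) + j) j : ℚ))
      = (Nat.choose (2*k + 2) (k+2) : ℚ) := by
    have : (∑ j ∈ Finset.range (k+1), Nat.choose ((k+1) + j) j)
        = Nat.choose (2*k + 2) (k+2) := by
      have h1 : ∀ j, Nat.choose ((k+1) + j) j = Nat.choose ((k+1) + j) (k+1) := by
        intro j
        rw [← Nat.choose_symm (Nat.le_add_right (k+1) j)]
        congr 1
        omega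
      simp_rw [h1]
      have h2 : (∑ j ∈ Finset.range (k+1), Nat.choose ((k+1) + j) (k+1))
          = ∑ i ∈ Finset.Icc (k+1) (2*k+1), Nat.choose i (k+1) := by
        rw [Finset.range_eq_Ico]
        refine Finset.sum_nbij' (fun j => (k+1) + j) (fun i => i - (k+1)) ?_ ?_ ?_ ?_ ?_ <;>
          (intro a ha; simp only [Finset.mem_Ico, Finset.mem_Icc] at *) <;> first | omega | (congr 1 <;> omega)
      rw [h2, Nat.sum_Icc_choose]
    exact_mod_cast congrArg (Nat.cast : ℕ → ℚ) this
  rw [hs1, hs2]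
  -- Final identities
  have hA : (Nat.choose (2*k+2) (k+1) : ℚ) = 2 * Nat.choose (2*k+1) (k+1) := by
    have h1 : Nat.choose (2*k+2) (k+1) = Nat.choose (2*k+1) k + Nat.choose (2*k+1) (k+1) := by
      have := Nat.choose_succ_succ (2*k+1) k
      simpa [show 2*k+1+1 = 2*k+2 from rfl] using this
    have h2 : Nat.choose (2*k+1) k = Nat.choose (2*k+1) (k+1) := by
      rw [← Nat.choose_symm (by omega : k + 1 ≤ 2*k+1)]
      congr 1
      omega
    have : Nat.choose (2*k+2) (k+1) = 2 * Nat.choose (2*k+1) (k+1) := by omega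
    exact_mod_cast congrArg (Nat.cast : ℕ → ℚ) this
  have hB : (Nat.choose (2*k+2) (k+2) : ℚ) * ((k:ℚ)+2) = (Nat.choose (2*k+2) (k+1) : ℚ) * ((k:ℚ)+1) := by
    have := Nat.choose_succ_right_eq (2*k+2) (k+1)
    have h3 : 2*k+2 - (k+1) = k+1 := by omega
    rw [h3] at this
    exact_mod_cast congrArg (Nat.cast : ℕ → ℚ) this
  have hC : ((k:ℚ)+2) * catalan (k+1) = (Nat.choose (2*k+2) (k+1) : ℚ) := by
    have := succ_mul_catalan_eq_centralBinom (k+1)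
    have h4 : (k+1).centralBinom = Nat.choose (2*k+2) (k+1) := by
      rw [Nat.centralBinom]
      congr 1 <;> omega
    rw [h4] at this
    exact_mod_cast congrArg (Nat.cast : ℕ → ℚ) this
  refine mul_left_cancel₀ (show ((k:ℚ)+2) ≠ 0 by positivity) ?_
  linear_combination (-(k:ℚ)-2) * hA - hB - hC
end

section
/- Let ω₁, ω₂ > 0 and 0 < |z| < √ω₂. Define μ_z on ℕ by μ_z({0}) = ω₁(ω₂-|z|²)/(ω₁ω₂-(ω₁-ω₂)|z|²) and μ_z({n}) = μ_z({0})·(|z|²/ω₁)·(|z|²/ω₂)^{n-1} for n ≥ 1. Then μ_z is a probability measure on ℕ, and its Fourier transform Σ_{n≥0} e^{itn}·μ_z({n}) equals (ω₁(ω₂-|z|²)/(ω₁ω₂-(ω₁-ω₂)|z|²))·(1 + |z|²e^{it}/(ω₁(1 - (|z|²/ω₂)e^{it}))). -/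
open Complex

theorem stmt_17 (ω₁ ω₂ : ℝ) (hω₁ : 0 < ω₁) (hω₂ : 0 < ω₂) (z : ℂ)
    (hz0 : z ≠ 0) (hz : ‖z‖ < Real.sqrt ω₂) (μ : ℕ → ℝ)
    (hμ0 : μ 0 = ω₁ * (ω₂ - (‖z‖) ^ 2)
        / (ω₁ * ω₂ - (ω₁ - ω₂) * (‖z‖) ^ 2))
    (hμn : ∀ n : ℕ, 1 ≤ n →
      μ n = ω₁ * (ω₂ - (‖z‖) ^ 2)
          / (ω₁ * ω₂ - (ω₁ - ω₂) * (‖z‖) ^ 2)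
          * ((‖z‖) ^ 2 / ω₁) * ((‖z‖) ^ 2 / ω₂) ^ (n - 1)) :
    (∀ n, 0 ≤ μ n) ∧ HasSum μ 1 ∧
    ∀ t : ℝ, (∑' n : ℕ, Complex.exp (I * t * n) * (μ n : ℂ))
      = ((ω₁ * (ω₂ - (‖z‖) ^ 2)
            / (ω₁ * ω₂ - (ω₁ - ω₂) * (‖z‖) ^ 2) : ℝ) : ℂ)
        * (1 + ((‖z‖ : ℂ) ^ 2 * Complex.exp (I * t))
            / ((ω₁ : ℂ) * (1 - (((‖z‖) ^ 2 / ω₂ : ℝ) : ℂ) * Complex.exp (I * t)))) := by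
  set r : ℝ := (‖z‖) ^ 2 with hrdef
  have hr0 : 0 < r := pow_pos (norm_pos_iff.mpr hz0) 2
  have hrω₂ : r < ω₂ := by
    nlinarith [Real.sq_sqrt hω₂.le, norm_nonneg z, Real.sqrt_nonneg ω₂, hz]
  have hD : 0 < ω₁ * ω₂ - (ω₁ - ω₂) * r := by nlinarith
  have hμ0pos : 0 < μ 0 := by
    rw [hμ0]; exact div_pos (by nlinarith) hD
  have hnonneg : ∀ n, 0 ≤ μ n := by
    intro n
    cases n with
    | zero => exact hμ0pos.le
    | succ k =>
      rw [hμn (k + 1) (by omega)]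
      have h0 : 0 ≤ ω₁ * (ω₂ - r) / (ω₁ * ω₂ - (ω₁ - ω₂) * r) := by
        rw [← hμ0]; exact hμ0pos.le
      exact mul_nonneg (mul_nonneg h0 (by positivity)) (by positivity)
  refine ⟨hnonneg, ?_, ?_⟩
  · -- HasSum μ 1
    have hq0 : (0:ℝ) ≤ r / ω₂ := by positivity
    have hq1 : r / ω₂ < 1 := (div_lt_one hω₂).mpr hrω₂
    have hgeo := (hasSum_geometric_of_lt_one hq0 hq1).mul_left
      (ω₁ * (ω₂ - r) / (ω₁ * ω₂ - (ω₁ - ω₂) * r) * (r / ω₁))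
    have heq : (fun n : ℕ => μ (n + 1)) =
        fun n : ℕ => ω₁ * (ω₂ - r) / (ω₁ * ω₂ - (ω₁ - ω₂) * r) * (r / ω₁) * (r / ω₂) ^ n := by
      funext n
      rw [hμn (n + 1) (by omega)]
      simp
    rw [← heq] at hgeo
    have hS := (hasSum_nat_add_iff (f := μ) 1).mp hgeo
    convert hS using 1
    · rfl
    rw [Finset.sum_range_one, hμ0]
    have h1q : (1 : ℝ) - r / ω₂ ≠ 0 := by
      have : r / ω₂ < 1 := hq1
      linarith
    have hωr : ω₂ - r ≠ 0 := by linarith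
    field_simp [hD.ne', h1q]
    rw [eq_div_iff (by nlinarith)]
    ring
  · intro t
    set E : ℂ := Complex.exp (I * t) with hE
    have hEnorm : ‖E‖ = 1 := by
      rw [hE, mul_comm]
      exact Complex.norm_exp_ofReal_mul_I t
    have hqE : ‖((r / ω₂ : ℝ) : ℂ) * E‖ < 1 := by
      have h1 : ‖((r / ω₂ : ℝ) : ℂ) * E‖ = r / ω₂ := by
        simp only [norm_mul, hEnorm, mul_one,
          Complex.norm_of_nonneg (by positivity : (0:ℝ) ≤ r / ω₂)]
      rw [h1]
      exact (div_lt_one hω₂).mpr hrω₂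
    have h1qE : (1 : ℂ) - ((r / ω₂ : ℝ) : ℂ) * E ≠ 0 := by
      intro h
      have : ((r / ω₂ : ℝ) : ℂ) * E = 1 := by linear_combination -h
      rw [this] at hqE
      simp at hqE
    set c : ℂ := ((ω₁ * (ω₂ - r) / (ω₁ * ω₂ - (ω₁ - ω₂) * r) : ℝ) : ℂ) with hc
    have hgeo := (hasSum_geometric_of_norm_lt_one hqE).mul_left
      (c * ((r / ω₁ : ℝ) : ℂ) * E)
    have heq : (fun n : ℕ => Complex.exp (I * t * (n + 1 : ℕ)) * (μ (n + 1) : ℂ)) =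
        fun n : ℕ => c * ((r / ω₁ : ℝ) : ℂ) * E * (((r / ω₂ : ℝ) : ℂ) * E) ^ n := by
      funext n
      rw [hμn (n + 1) (by omega)]
      have hexp : Complex.exp (I * t * (n + 1 : ℕ)) = E ^ (n + 1) := by
        rw [hE, ← Complex.exp_nat_mul]
        ring_nf
      rw [hexp]
      push_cast [hc]
      rw [mul_pow]
      ring
    rw [← heq] at hgeo
    have hsum := (hasSum_nat_add_iff
      (f := fun n : ℕ => Complex.exp (I * t * n) * (μ n : ℂ)) 1).mp hgeo
    rw [hsum.tsum_eq, Finset.sum_range_one]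
    have h0 : Complex.exp (I * t * (0 : ℕ)) * (μ 0 : ℂ) = c := by
      simp [hc, hμ0]
    rw [h0]
    have hω₁' : (ω₁ : ℂ) ≠ 0 := by exact_mod_cast hω₁.ne'
    have hω₂' : (ω₂ : ℂ) ≠ 0 := by exact_mod_cast hω₂.ne'
    rw [hc]
    generalize ((ω₁ * (ω₂ - r) / (ω₁ * ω₂ - (ω₁ - ω₂) * r) : ℝ) : ℂ) = w
    have h1qE' : (ω₂ : ℂ) - (‖z‖ : ℂ) ^ 2 * E ≠ 0 := by
      intro h
      apply h1qE
      push_cast [hrdef]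
      field_simp
      linear_combination h
    push_cast [hrdef]
    field_simp
    ring
end
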